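/- Let V : ℝⁿ → ℝⁿ be a C¹ vector field and φ : ℝⁿ → ℝ a C¹ function such that the Lie derivative of φ along V satisfies ∇φ(x) ⬝ V(x) = K(x) · φ(x) for all x, where K is continuous. If X : ℝ → ℝⁿ is a solution of the ODE X' = V(X) with φ(X(0)) = 0, then φ(X(t)) = 0 for all t in the interval of existence. -/

import Mathlib

/-- Auxiliary: a scalar function satisfying a linear ODE `ψ' = c·ψ` on `[0,b]` with
`ψ 0 = 0` vanishes at `b`. -/
lemma darboux_aux (ψ c : ℝ → ℝ) (b : ℝ) (hb : 0 ≤ b)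
    (hψ : ∀ s ∈ Set.Icc 0 b, HasDerivAt ψ (c s * ψ s) s)
    (hc : ContinuousOn c (Set.Icc 0 b)) (h0 : ψ 0 = 0) : ψ b = 0 := by
  obtain ⟨C, hC⟩ := isCompact_Icc.exists_bound_of_continuousOn hc
  have hcont : ContinuousOn ψ (Set.Icc 0 b) := fun s hs =>
    (hψ s hs).continuousAt.continuousWithinAt
  have hf' : ∀ s ∈ Set.Ico 0 b, HasDerivWithinAt ψ (c s * ψ s) (Set.Ici s) s :=
    fun s hs => (hψ s ⟨hs.1, hs.2.le⟩).hasDerivWithinAt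
  have bound : ∀ s ∈ Set.Ico 0 b, ‖c s * ψ s‖ ≤ C * ‖ψ s‖ + 0 := by
    intro s hs
    rw [norm_mul, add_zero]
    exact mul_le_mul_of_nonneg_right (hC s ⟨hs.1, hs.2.le⟩) (norm_nonneg _)
  have := norm_le_gronwallBound_of_norm_deriv_right_le (δ := 0) (ε := 0) (K := C) hcont hf'
    (by simp [h0]) bound b ⟨hb, le_rfl⟩
  rw [sub_zero, gronwallBound_ε0_δ0] at this
  exact norm_le_zero_iff.mp this

/-- Darboux invariance theorem: if `φ` admits a cofactor `K` (i.e. `∇φ ⬝ V = K·φ`),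
then the zero set of `φ` is invariant along solutions of `X' = V(X)`. -/
theorem darboux_invariance
    (n : ℕ) (V : (Fin n → ℝ) → (Fin n → ℝ)) (hV : ContDiff ℝ 1 V)
    (φ : (Fin n → ℝ) → ℝ) (hφ : ContDiff ℝ 1 φ)
    (K : (Fin n → ℝ) → ℝ) (hK : Continuous K)
    (hcof : ∀ x, fderiv ℝ φ x (V x) = K x * φ x)
    (I : Set ℝ) (hI : I.OrdConnected) (h0 : (0 : ℝ) ∈ I)
    (X : ℝ → (Fin n → ℝ)) (hX : ∀ t ∈ I, HasDerivAt X (V (X t)) t)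
    (hinit : φ (X 0) = 0) :
    ∀ t ∈ I, φ (X t) = 0 := by
  intro t ht
  -- the composite ψ = φ ∘ X satisfies ψ' = (K ∘ X) · ψ on I
  have hψ : ∀ s ∈ I, HasDerivAt (fun u => φ (X u)) (K (X s) * φ (X s)) s := by
    intro s hs
    have h1 := (hφ.differentiable one_ne_zero (X s)).hasFDerivAt.comp_hasDerivAt s (hX s hs)
    simpa [Function.comp_def, hcof (X s)] using h1
  rcases le_or_gt 0 t with hle | hlt
  · have hsub : Set.Icc (0:ℝ) t ⊆ I := hI.out h0 ht
    exact darboux_aux (fun u => φ (X u)) (fun u => K (X u)) t hle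
      (fun s hs => hψ s (hsub hs))
      ((hK.comp_continuousOn (fun s hs => (hX s (hsub hs)).continuousAt.continuousWithinAt)))
      hinit
  · -- reverse time
    have hsub : Set.Icc t (0:ℝ) ⊆ I := hI.out ht h0
    have hsub' : ∀ s ∈ Set.Icc (0:ℝ) (-t), -s ∈ I := by
      intro s hs
      exact hsub ⟨by linarith [hs.2], by linarith [hs.1]⟩
    have key := darboux_aux (fun u => φ (X (-u))) (fun u => -K (X (-u))) (-t)
      (by linarith)
      (fun s hs => by
        have h1 := (hψ (-s) (hsub' s hs)).comp s (hasDerivAt_neg s)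
        simpa [Function.comp_def, mul_comm, mul_assoc, mul_left_comm] using h1)
      (by
        have : ContinuousOn (fun u : ℝ => X (-u)) (Set.Icc 0 (-t)) := fun s hs =>
          ((hX (-s) (hsub' s hs)).continuousAt.comp (continuousAt_neg (x := s))).continuousWithinAt
        exact (hK.comp_continuousOn this).neg)
      (by simpa using hinit)
    simpa using key
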